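/- Let C be a cocomplete category, D a small full subcategory of C, and consider the adjunction L ⊣ R between a reflective full subcategory E of presheaves on D and C, where R is fully faithful on representables and both L and R preserve colimits, with E generated under colimits by representables. Then the unit map e → R(L(e)) is an equivalence for every object e of E; i.e., L is fully faithful. -/

import Mathlib

open CategoryTheory CategoryTheory.Limits

universe v u

lemma aux_isIso_app_of_iso {A : Type*} {B : Type*} [Category A] [Category B]
    {F G : A ⥤ B} (η : F ⟶ G) {X Y : A} (i : X ≅ Y) (h : IsIso (η.app Y)) :
    IsIso (η.app X) := by
  have heq : η.app X = F.map i.hom ≫ η.app Y ≫ G.map i.inv := by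
    rw [← Category.assoc, η.naturality i.hom]
    simp
  rw [heq]
  infer_instance

/-- Let `C` be a cocomplete category, `D` a small full subcategory of `C` (given by a fully
faithful `ι : D ⥤ C`), and `E` a reflective full subcategory of presheaves on `D` containing
the representables, with an adjunction `L ⊣ R` between `E` and `C` such that `R` preserves
colimits, the unit is an isomorphism on representable presheaves, and `E` is generated under
colimits by the representables. Then the unit `e ⟶ R(L(e))` is an isomorphism for every
object `e` of `E`; i.e. `L` is fully faithful. -/
theorem stmt_0 {D : Type v} [SmallCategory D] {C : Type u} [Category.{v} C]
    [HasColimits C] (ι : D ⥤ C) [ι.Full] [ι.Faithful]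
    (Z : (Dᵒᵖ ⥤ Type v) → Prop)
    (h_rep : ∀ d : D, Z (yoneda.obj d))
    (L : ObjectProperty.FullSubcategory Z ⥤ C) (R : C ⥤ ObjectProperty.FullSubcategory Z) (adj : L ⊣ R)
    (hL : Nonempty (PreservesColimits L)) (hR : Nonempty (PreservesColimits R))
    (hL_rep : ∀ d : D, Nonempty (L.obj ⟨yoneda.obj d, h_rep d⟩ ≅ ι.obj d))
    (h_unit_rep : ∀ d : D, IsIso (adj.unit.app ⟨yoneda.obj d, h_rep d⟩))
    (h_gen : ∀ e : ObjectProperty.FullSubcategory Z, ∃ (K : Type v) (_ : SmallCategory K)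
      (G : K ⥤ ObjectProperty.FullSubcategory Z) (c : Cocone G),
        Nonempty (IsColimit c) ∧ Nonempty (c.pt ≅ e) ∧
        ∀ k : K, ∃ d : D, Nonempty ((G.obj k).obj ≅ yoneda.obj d)) :
    ∀ e : ObjectProperty.FullSubcategory Z, IsIso (adj.unit.app e) := by
  intro e
  obtain ⟨K, _, G, c, ⟨hc⟩, ⟨ie⟩, hrep⟩ := h_gen e
  obtain ⟨pL⟩ := hL
  obtain ⟨pR⟩ := hR
  haveI := pL
  haveI := pR
  -- unit is iso on each object of the diagram
  have hGk : ∀ k, IsIso (adj.unit.app (G.obj k)) := by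
    intro k
    obtain ⟨d, ⟨j⟩⟩ := hrep k
    have jj : G.obj k ≅ ⟨yoneda.obj d, h_rep d⟩ :=
      (ObjectProperty.ι Z).preimageIso j
    exact aux_isIso_app_of_iso adj.unit jj (h_unit_rep d)
  -- the natural transformation restricted to the diagram
  let α : G ⟶ G ⋙ L ⋙ R :=
    { app := fun k => adj.unit.app (G.obj k)
      naturality := fun k k' f => adj.unit.naturality (G.map f) }
  haveI : ∀ k, IsIso (α.app k) := hGk
  haveI : IsIso α := NatIso.isIso_of_isIso_app α
  have hc' : IsColimit ((L ⋙ R).mapCocone c) := isColimitOfPreserves _ hc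
  have hc'' : IsColimit ((Cocone.precompose α).obj ((L ⋙ R).mapCocone c)) :=
    (IsColimit.precomposeHomEquiv (asIso α) _).symm hc'
  let f : c ⟶ (Cocone.precompose α).obj ((L ⋙ R).mapCocone c) :=
    { hom := adj.unit.app c.pt
      w := fun k => adj.unit.naturality (c.ι.app k) }
  haveI : IsIso f := IsColimit.hom_isIso hc hc'' f
  have : IsIso (adj.unit.app c.pt) := by
    have := Functor.map_isIso (Cocones.forget G) f
    exact this
  exact aux_isIso_app_of_iso adj.unit ie.symm this
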